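/- For every natural number n ≥ 3, the game chromatic number of the 4×n cylinder graph satisfies χ_g(P_4 □ C_n) ≤ 5; that is, Alice has a winning strategy in the 5-coloring game on P_4 □ C_n. -/

import Mathlib

open SimpleGraph

/-- A move coloring vertex `v` with color `col` is valid for the partial coloring `c`
if `v` is uncolored and no neighbor of `v` already has color `col`. -/
def validMove {V : Type*} (G : SimpleGraph V) {k : ℕ} (c : V → Option (Fin k))
    (v : V) (col : Fin k) : Prop :=
  c v = none ∧ ∀ u, G.Adj u v → c u ≠ some col

/-- All vertices are colored. -/
def allColored {V : Type*} {k : ℕ} (c : V → Option (Fin k)) : Prop :=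
  ∀ v, c v ≠ none

/-- `AliceWins G k turn c` : starting from the partial proper coloring `c` of `G`,
with `turn = true` meaning that it is Alice's move (`turn = false` : Bob's move),
Alice can force the `k`-coloring game to end with every vertex colored. -/
inductive AliceWins {V : Type*} [DecidableEq V] (G : SimpleGraph V) (k : ℕ) :
    Bool → (V → Option (Fin k)) → Prop
  | finished (turn : Bool) (c : V → Option (Fin k)) (h : allColored c) :
      AliceWins G k turn c
  | aliceMove (c : V → Option (Fin k)) (v : V) (col : Fin k)
      (hm : validMove G c v col)
      (h : AliceWins G k false (Function.update c v (some col))) :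
      AliceWins G k true c
  | bobTurn (c : V → Option (Fin k))
      (hne : ∃ v col, validMove G c v col)
      (h : ∀ v col, validMove G c v col →
        AliceWins G k true (Function.update c v (some col))) :
      AliceWins G k false c

/-- `BobWins G k turn c` : starting from the partial proper coloring `c` of `G`,
with `turn = true` meaning that it is Alice's move (`turn = false` : Bob's move),
Bob can force the `k`-coloring game to end with some vertex left uncolored. -/
inductive BobWins {V : Type*} [DecidableEq V] (G : SimpleGraph V) (k : ℕ) :
    Bool → (V → Option (Fin k)) → Prop
  | aliceTurn (c : V → Option (Fin k)) (h0 : ¬ allColored c)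
      (h : ∀ v col, validMove G c v col →
        BobWins G k false (Function.update c v (some col))) :
      BobWins G k true c
  | bobMove (c : V → Option (Fin k)) (v : V) (col : Fin k)
      (hm : validMove G c v col)
      (h : BobWins G k true (Function.update c v (some col))) :
      BobWins G k false c
  | bobStuck (c : V → Option (Fin k)) (h0 : ¬ allColored c)
      (h : ∀ v col, ¬ validMove G c v col) :
      BobWins G k false c

/-- The game chromatic number: the least `k` such that Alice has a winning strategy
in the `k`-coloring game on `G` (Alice moves first), starting from the empty coloring. -/
noncomputable def gameChromaticNumber {V : Type*} [DecidableEq V] (G : SimpleGraph V) : ℕ :=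
  sInf {k | AliceWins G k true (fun _ => none)}

/-- The Bob-start game chromatic number: the least `k` such that Alice has a winning
strategy in the `k`-coloring game on `G` in which Bob moves first. -/
noncomputable def bobStartGameChromaticNumber {V : Type*} [DecidableEq V]
    (G : SimpleGraph V) : ℕ :=
  sInf {k | AliceWins G k false (fun _ => none)}

instance pathGraphAdjDecidable (n : ℕ) : DecidableRel (pathGraph n).Adj :=
  fun _ _ => decidable_of_iff _ pathGraph_adj.symm

instance boxProdAdjDecidable {α β : Type*} (G : SimpleGraph α) (H : SimpleGraph β)
    [DecidableEq α] [DecidableEq β] [DecidableRel G.Adj] [DecidableRel H.Adj] :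
    DecidableRel (G □ H).Adj :=
  fun _ _ => decidable_of_iff _ (SimpleGraph.boxProd_adj).symm

lemma exists_valid_color {V : Type*} [DecidableEq V] (G : SimpleGraph V)
    {k : ℕ} (c : V → Option (Fin k)) (v : V) (s : Finset V)
    (hs : ∀ u, G.Adj u v → u ∈ s) (hcard : s.card < k) :
    ∃ col : Fin k, ∀ u, G.Adj u v → c u ≠ some col := by
  by_contra h
  push_neg at h
  choose f hf hc using h
  have hinj : Function.Injective f := by
    intro a b hab
    have h1 : (some a : Option (Fin k)) = some b := by rw [← hc a, hab, hc b]
    exact Option.some_injective _ h1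
  have : k ≤ s.card := by
    rw [← Fintype.card_fin k]
    exact Finset.card_le_card_of_injOn f (fun a _ => hs (f a) (hf a)) hinj.injOn
  omega

lemma aliceWins_of_degree_lt {V : Type*} [Fintype V] [DecidableEq V] (G : SimpleGraph V)
    {k : ℕ} (hdeg : ∀ v, ∃ s : Finset V, (∀ u, G.Adj u v → u ∈ s) ∧ s.card < k) (turn : Bool)
    (c : V → Option (Fin k)) : AliceWins G k turn c := by
  suffices h : ∀ N (turn : Bool) (c : V → Option (Fin k)),
      (Finset.univ.filter fun v => c v = none).card ≤ N → AliceWins G k turn c from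
    h _ turn c le_rfl
  intro N
  induction N with
  | zero =>
    intro turn c hc
    refine AliceWins.finished turn c fun v hv => ?_
    have : v ∈ Finset.univ.filter fun v => c v = none := by simpa using hv
    rw [Finset.card_eq_zero.mp (Nat.le_zero.mp hc)] at this
    exact absurd this (Finset.notMem_empty v)
  | succ N ih =>
    intro turn c hc
    by_cases hall : allColored c
    · exact AliceWins.finished turn c hall
    · simp only [allColored, not_forall, not_ne_iff] at hall
      obtain ⟨v, hv⟩ := hall
      have hcard : ∀ (w : V) (col : Fin k), c w = none →
          (Finset.univ.filter fun u => Function.update c w (some col) u = none).card ≤ N := by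
        intro w col hw
        have hss : (Finset.univ.filter fun u => Function.update c w (some col) u = none) ⊂
            Finset.univ.filter fun u => c u = none := by
          constructor
          · intro u hu
            simp only [Finset.mem_filter, Finset.mem_univ, true_and] at hu ⊢
            rcases eq_or_ne u w with rfl | hne
            · simp [Function.update_self] at hu
            · rwa [Function.update_of_ne hne] at hu
          · intro hsub
            have : w ∈ Finset.univ.filter fun u => c u = none := by simpa using hw
            have := hsub this
            simp [Function.update_self] at this
        have := Finset.card_lt_card hss
        omega
      cases turn with
      | true =>
        obtain ⟨s, hs, hcards⟩ := hdeg v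
        obtain ⟨col, hcol⟩ := exists_valid_color G c v s hs hcards
        exact AliceWins.aliceMove c v col ⟨hv, hcol⟩ (ih false _ (hcard v col hv))
      | false =>
        refine AliceWins.bobTurn c ?_ ?_
        · obtain ⟨s, hs, hcards⟩ := hdeg v
          obtain ⟨col, hcol⟩ := exists_valid_color G c v s hs hcards
          exact ⟨v, col, hv, hcol⟩
        · intro w col hm
          exact ih true _ (hcard w col hm.1)


set_option maxHeartbeats 1000000 in
/-- For every `n ≥ 3`, the game chromatic number of the `4 × n` cylinder graph
`P₄ □ Cₙ` is at most `5`; that is, Alice has a winning strategy in the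
`5`-coloring game on `P₄ □ Cₙ`. -/
theorem gameChromaticNumber_cylinder_le_five (n : ℕ) (hn : 3 ≤ n) :
    gameChromaticNumber (pathGraph 4 □ cycleGraph n) ≤ 5 ∧
      AliceWins (pathGraph 4 □ cycleGraph n) 5 true (fun _ => none) := by
  obtain ⟨m, rfl⟩ : ∃ m, n = m + 3 := ⟨n - 3, by omega⟩
  have hdeg : ∀ v : Fin 4 × Fin (m + 3), ∃ s : Finset (Fin 4 × Fin (m + 3)),
      (∀ u, (pathGraph 4 □ cycleGraph (m + 3)).Adj u v → u ∈ s) ∧ s.card < 5 := by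
    intro v
    refine ⟨(pathGraph 4 □ cycleGraph (m + 3)).neighborFinset v,
      fun u h => (SimpleGraph.mem_neighborFinset _ _ _).mpr h.symm, ?_⟩
    rw [← SimpleGraph.degree, SimpleGraph.degree_boxProd]
    have h1 : ∀ a : Fin 4, (pathGraph 4).degree a ≤ 2 := by decide
    have h1' := h1 v.1
    have h2 : (cycleGraph (m + 3)).degree v.2 = 2 := cycleGraph_degree_three_le
    omega
  have hA := aliceWins_of_degree_lt (pathGraph 4 □ cycleGraph (m + 3)) hdeg true (fun _ => none)
  exact ⟨Nat.sInf_le hA, hA⟩
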